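/- Let Q and Q̄ be n×n real symmetric matrices with ‖Q‖₂ ≤ 1 and ‖Q̄‖₂ ≤ 1, let α ∈ (0,1), let d₁,…,d_n > 0 and w₁,…,w_n > 0 with D = diag(d), W = diag(w), w_max = max_i w_i, w_min = min_i w_i, and let v ∈ ℝⁿ. Suppose ‖Q − Q̄‖₂ ≤ t, max_i |√(d_i/w_i) − 1| ≤ δ and max_i |√(w_i/d_i) − 1| ≤ δ for some t, δ ≥ 0. Then ‖ (1−α) D^{1/2}(I − αQ)^{-1}D^{-1/2} v − (1−α) W^{1/2}(I − αQ̄)^{-1}W^{-1/2} v ‖₁ ≤ √n · ‖v‖₂ · √(w_max/w_min) · ( t/(1−α) + 2δ + δ² ). (When Q = D^{-1/2}AD^{-1/2} for the adjacency matrix A of a graph with degree matrix D, and Q̄ = W^{-1/2}ĀW^{-1/2} with Ā = E[A] and W = E[D], the left-hand side is the ℓ¹ distance between the PageRank vector π = (1−α)(I−αAD^{-1})^{-1}v and the averaged PageRank π̄_SBM = (1−α)(I−αĀW^{-1})^{-1}v of Theorem 4 for the Stochastic Block Model.) -/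

import Mathlib

open Matrix Finset
set_option maxHeartbeats 800000
set_option synthInstance.maxHeartbeats 200000

/-- Spectral norm of a matrix: the operator norm induced by the Euclidean vector norm. -/
noncomputable def sNorm {n : ℕ} (M : Matrix (Fin n) (Fin n) ℝ) : ℝ :=
  ‖Matrix.toEuclideanCLM (𝕜 := ℝ) M‖

/-- Euclidean norm of a vector. -/
noncomputable def vNorm2 {n : ℕ} (x : Fin n → ℝ) : ℝ :=
  Real.sqrt (∑ i, (x i) ^ 2)

lemma vNorm2_eq_norm {n : ℕ} (x : Fin n → ℝ) :
    vNorm2 x = ‖(WithLp.equiv 2 (Fin n → ℝ)).symm x‖ := by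
  rw [EuclideanSpace.norm_eq]
  simp [vNorm2, Real.norm_eq_abs, sq_abs]

lemma l1_le_sqrt_mul_vNorm2 {n : ℕ} (x : Fin n → ℝ) :
    ∑ i, |x i| ≤ Real.sqrt n * vNorm2 x := by
  have h : (∑ i, |x i|) ^ 2 ≤ (n : ℝ) * ∑ i, (x i) ^ 2 := by
    have := sq_sum_le_card_mul_sum_sq (s := (univ : Finset (Fin n))) (f := fun i => |x i|)
    simpa [sq_abs] using this
  have h0 : (0:ℝ) ≤ ∑ i, |x i| := Finset.sum_nonneg fun i _ => abs_nonneg _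
  calc ∑ i, |x i| = Real.sqrt ((∑ i, |x i|) ^ 2) := by rw [Real.sqrt_sq h0]
    _ ≤ Real.sqrt ((n : ℝ) * ∑ i, (x i) ^ 2) := Real.sqrt_le_sqrt h
    _ = Real.sqrt n * vNorm2 x := by
        rw [Real.sqrt_mul (by positivity)]; rfl

lemma vNorm2_mulVec_le {n : ℕ} (M : Matrix (Fin n) (Fin n) ℝ) (x : Fin n → ℝ) :
    vNorm2 (M *ᵥ x) ≤ sNorm M * vNorm2 x := by
  rw [vNorm2_eq_norm, vNorm2_eq_norm]
  have h := (Matrix.toEuclideanCLM (𝕜 := ℝ) M).le_opNorm ((WithLp.equiv 2 (Fin n → ℝ)).symm x)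
  rwa [WithLp.equiv_symm_apply, Matrix.toEuclideanCLM_toLp, ← WithLp.equiv_symm_apply] at h

lemma sNorm_diagonal_le {n : ℕ} (f : Fin n → ℝ) (c : ℝ) (hc : 0 ≤ c)
    (h : ∀ i, |f i| ≤ c) : sNorm (Matrix.diagonal f) ≤ c := by
  apply ContinuousLinearMap.opNorm_le_bound _ hc
  intro y
  set x : Fin n → ℝ := WithLp.equiv 2 (Fin n → ℝ) y with hx
  have hy : y = (WithLp.equiv 2 (Fin n → ℝ)).symm x := by simp [hx]
  rw [hy, WithLp.equiv_symm_apply, Matrix.toEuclideanCLM_toLp, ← WithLp.equiv_symm_apply,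
    ← vNorm2_eq_norm, ← vNorm2_eq_norm]
  have hmv : Matrix.diagonal f *ᵥ x = fun i => f i * x i := by
    funext i; simp [Matrix.mulVec_diagonal]
  rw [hmv]
  unfold vNorm2
  have hrw : c * Real.sqrt (∑ i, (x i) ^ 2) = Real.sqrt (c ^ 2 * ∑ i, (x i) ^ 2) := by
    rw [Real.sqrt_mul (by positivity), Real.sqrt_sq hc]
  rw [hrw]
  apply Real.sqrt_le_sqrt
  rw [Finset.mul_sum]
  apply Finset.sum_le_sum
  intro i _
  have hi := h i
  have habs : |f i * x i| ≤ c * |x i| := by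
    rw [abs_mul]; exact mul_le_mul_of_nonneg_right hi (abs_nonneg _)
  calc (f i * x i) ^ 2 = |f i * x i| ^ 2 := (sq_abs _).symm
    _ ≤ (c * |x i|) ^ 2 := by apply pow_le_pow_left₀ (abs_nonneg _) habs
    _ = c ^ 2 * (x i) ^ 2 := by rw [mul_pow, sq_abs]

lemma inv_facts {n : ℕ} [NeZero n] (Q : Matrix (Fin n) (Fin n) ℝ) (hQ : sNorm Q ≤ 1)
    (α : ℝ) (h0 : 0 < α) (h1 : α < 1) :
    (1 - α • Q) * (1 - α • Q)⁻¹ = 1 ∧ (1 - α • Q)⁻¹ * (1 - α • Q) = 1 ∧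
      sNorm ((1 - α • Q)⁻¹) ≤ 1 / (1 - α) := by
  set φ := Matrix.toEuclideanCLM (𝕜 := ℝ) (n := Fin n) with hφdef
  have hsn : ‖α • φ Q‖ ≤ α := by
    calc ‖α • φ Q‖ ≤ ‖α‖ * ‖φ Q‖ := ContinuousLinearMap.opNorm_smul_le _ _
      _ ≤ |α| * 1 := mul_le_mul_of_nonneg_left hQ (abs_nonneg α)
      _ = α := by rw [mul_one, abs_of_pos h0]
  have hnorm : ‖α • φ Q‖ < 1 := lt_of_le_of_lt hsn h1
  set u : Units (EuclideanSpace ℝ (Fin n) →L[ℝ] EuclideanSpace ℝ (Fin n)) :=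
    Units.oneSub (α • φ Q) hnorm with hu
  have hφ1 : φ (1 - α • Q) = ↑u := by
    rw [hu, Units.val_oneSub, map_sub, _root_.map_one]
    congr 1
    exact _root_.map_smul φ α Q
  set B : Matrix (Fin n) (Fin n) ℝ := φ.symm ↑u⁻¹ with hB
  have hφB : φ B = ↑u⁻¹ := by rw [hB]; exact φ.apply_symm_apply _
  have hright : (1 - α • Q) * B = 1 := by
    have h : φ ((1 - α • Q) * B) = φ 1 := by
      rw [_root_.map_mul, hφ1, hφB, _root_.map_one]
      exact u.mul_inv
    exact φ.injective h
  have hleft : B * (1 - α • Q) = 1 := by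
    have h : φ (B * (1 - α • Q)) = φ 1 := by
      rw [_root_.map_mul, hφ1, hφB, _root_.map_one]
      exact u.inv_mul
    exact φ.injective h
  have hInv : (1 - α • Q)⁻¹ = B := Matrix.inv_eq_right_inv hright
  have hgeo : (↑u⁻¹ : EuclideanSpace ℝ (Fin n) →L[ℝ] EuclideanSpace ℝ (Fin n)) =
      1 + (α • φ Q) * ↑u⁻¹ := by
    have h := u.mul_inv
    rw [hu, Units.val_oneSub] at h
    rw [sub_mul, one_mul] at h
    exact sub_eq_iff_eq_add.mp h
  have hone : ‖(1 : EuclideanSpace ℝ (Fin n) →L[ℝ] EuclideanSpace ℝ (Fin n))‖ ≤ 1 := by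
    rw [ContinuousLinearMap.one_def]
    exact ContinuousLinearMap.norm_id_le
  have hbnd : ‖(↑u⁻¹ : EuclideanSpace ℝ (Fin n) →L[ℝ] EuclideanSpace ℝ (Fin n))‖ ≤
      1 + α * ‖(↑u⁻¹ : EuclideanSpace ℝ (Fin n) →L[ℝ] EuclideanSpace ℝ (Fin n))‖ := by
    calc ‖(↑u⁻¹ : EuclideanSpace ℝ (Fin n) →L[ℝ] EuclideanSpace ℝ (Fin n))‖
        = ‖1 + (α • φ Q) * ↑u⁻¹‖ := by rw [← hgeo]
      _ ≤ ‖(1 : EuclideanSpace ℝ (Fin n) →L[ℝ] EuclideanSpace ℝ (Fin n))‖ +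
          ‖(α • φ Q) * (↑u⁻¹ : EuclideanSpace ℝ (Fin n) →L[ℝ] EuclideanSpace ℝ (Fin n))‖ :=
          norm_add_le _ _
      _ ≤ 1 + ‖α • φ Q‖ * ‖(↑u⁻¹ : EuclideanSpace ℝ (Fin n) →L[ℝ] EuclideanSpace ℝ (Fin n))‖ := by
          gcongr; exact norm_mul_le _ _
      _ ≤ 1 + α * ‖(↑u⁻¹ : EuclideanSpace ℝ (Fin n) →L[ℝ] EuclideanSpace ℝ (Fin n))‖ := by
          gcongr
  refine ⟨by rw [hInv]; exact hright, by rw [hInv]; exact hleft, ?_⟩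
  rw [hInv]
  show ‖φ B‖ ≤ 1 / (1 - α)
  rw [hφB]
  rw [le_div_iff₀ (by linarith : (0:ℝ) < 1 - α)]
  nlinarith [norm_nonneg (↑u⁻¹ : EuclideanSpace ℝ (Fin n) →L[ℝ] EuclideanSpace ℝ (Fin n))]

lemma sNorm_nonneg {n : ℕ} (M : Matrix (Fin n) (Fin n) ℝ) : 0 ≤ sNorm M := norm_nonneg _

lemma sNorm_mul_le {n : ℕ} (A B : Matrix (Fin n) (Fin n) ℝ) :
    sNorm (A * B) ≤ sNorm A * sNorm B := by
  unfold sNorm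
  rw [_root_.map_mul]
  exact norm_mul_le _ _

lemma sNorm_add_le {n : ℕ} (A B : Matrix (Fin n) (Fin n) ℝ) :
    sNorm (A + B) ≤ sNorm A + sNorm B := by
  unfold sNorm
  rw [map_add]
  exact norm_add_le _ _

lemma sNorm_smul_le {n : ℕ} (c : ℝ) (M : Matrix (Fin n) (Fin n) ℝ) :
    sNorm (c • M) ≤ |c| * sNorm M := by
  unfold sNorm
  rw [_root_.map_smul]
  exact ContinuousLinearMap.opNorm_smul_le _ _

lemma sNorm_mul2_le {n : ℕ} {A B : Matrix (Fin n) (Fin n) ℝ} {a b : ℝ}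
    (ha : sNorm A ≤ a) (hb : sNorm B ≤ b) (ha0 : 0 ≤ a) :
    sNorm (A * B) ≤ a * b :=
  le_trans (sNorm_mul_le A B) (mul_le_mul ha hb (sNorm_nonneg B) ha0)

lemma sNorm_mul3_le {n : ℕ} {A B C : Matrix (Fin n) (Fin n) ℝ} {a b c : ℝ}
    (ha : sNorm A ≤ a) (hb : sNorm B ≤ b) (hc : sNorm C ≤ c)
    (ha0 : 0 ≤ a) (hb0 : 0 ≤ b) :
    sNorm (A * B * C) ≤ a * b * c :=
  sNorm_mul2_le (sNorm_mul2_le ha hb ha0) hc (by positivity)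

/-- for symmetric `Q, Q̄` of spectral norm at most one, `α ∈ (0,1)`,
positive diagonal scalings `D, W`, with `‖Q − Q̄‖₂ ≤ t`, `max_i |√(d_i/w_i) − 1| ≤ δ`
and `max_i |√(w_i/d_i) − 1| ≤ δ`, the ℓ¹ distance between
`(1−α)D^{1/2}(I−αQ)^{-1}D^{-1/2}v` and `(1−α)W^{1/2}(I−αQ̄)^{-1}W^{-1/2}v`
is at most `√n·‖v‖₂·√(w_max/w_min)·(t/(1−α) + 2δ + δ²)`. -/
theorem pagerank_sbm_l1_error_bound
    (n : ℕ) [NeZero n]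
    (Q Qbar : Matrix (Fin n) (Fin n) ℝ)
    (hQsymm : Q.IsSymm) (hQbarSymm : Qbar.IsSymm)
    (hQ1 : sNorm Q ≤ 1) (hQbar1 : sNorm Qbar ≤ 1)
    (α : ℝ) (hα : α ∈ Set.Ioo (0 : ℝ) 1)
    (d w : Fin n → ℝ) (hd : ∀ i, 0 < d i) (hw : ∀ i, 0 < w i)
    (v : Fin n → ℝ)
    (t δ : ℝ) (ht : 0 ≤ t) (hδ : 0 ≤ δ)
    (hQQbar : sNorm (Q - Qbar) ≤ t)
    (hδ₁ : ∀ i, |Real.sqrt (d i / w i) - 1| ≤ δ)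
    (hδ₂ : ∀ i, |Real.sqrt (w i / d i) - 1| ≤ δ) :
    ∑ i, |((1 - α) • ((Matrix.diagonal (fun i => Real.sqrt (d i)) * (1 - α • Q)⁻¹ *
            Matrix.diagonal (fun i => (Real.sqrt (d i))⁻¹)) *ᵥ v) -
          (1 - α) • ((Matrix.diagonal (fun i => Real.sqrt (w i)) * (1 - α • Qbar)⁻¹ *
            Matrix.diagonal (fun i => (Real.sqrt (w i))⁻¹)) *ᵥ v)) i| ≤
      Real.sqrt n * vNorm2 v *
        Real.sqrt (univ.sup' univ_nonempty w / univ.inf' univ_nonempty w) *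
        (t / (1 - α) + 2 * δ + δ ^ 2) := by
  obtain ⟨h0, h1⟩ := hα
  have h1α : (0:ℝ) < 1 - α := by linarith
  -- notation
  set R : Matrix (Fin n) (Fin n) ℝ := (1 - α • Q)⁻¹ with hR
  set Rb : Matrix (Fin n) (Fin n) ℝ := (1 - α • Qbar)⁻¹ with hRb
  obtain ⟨hQr, hQl, hQn⟩ := inv_facts Q hQ1 α h0 h1
  obtain ⟨hQbr, hQbl, hQbn⟩ := inv_facts Qbar hQbar1 α h0 h1
  set Sd : Matrix (Fin n) (Fin n) ℝ := Matrix.diagonal (fun i => Real.sqrt (d i)) with hSd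
  set Sdi : Matrix (Fin n) (Fin n) ℝ := Matrix.diagonal (fun i => (Real.sqrt (d i))⁻¹) with hSdi
  set Sw : Matrix (Fin n) (Fin n) ℝ := Matrix.diagonal (fun i => Real.sqrt (w i)) with hSw
  set Swi : Matrix (Fin n) (Fin n) ℝ := Matrix.diagonal (fun i => (Real.sqrt (w i))⁻¹) with hSwi
  set E : Matrix (Fin n) (Fin n) ℝ := Matrix.diagonal (fun i => Real.sqrt (d i / w i)) with hE
  set E2 : Matrix (Fin n) (Fin n) ℝ := Matrix.diagonal (fun i => Real.sqrt (w i / d i)) with hE2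
  set wmax := univ.sup' univ_nonempty w with hwmax
  set wmin := univ.inf' univ_nonempty w with hwmin
  have hwminpos : 0 < wmin := by
    obtain ⟨i, _, hi⟩ := Finset.exists_mem_eq_inf' univ_nonempty w
    rw [hwmin, hi]; exact hw i
  have hwmaxpos : 0 < wmax := by
    obtain ⟨i, _, hi⟩ := Finset.exists_mem_eq_sup' univ_nonempty w
    rw [hwmax, hi]; exact hw i
  -- diagonal factorizations
  have hfac1 : Sd = Sw * E := by
    rw [hSd, hSw, hE, Matrix.diagonal_mul_diagonal]
    apply congrArg Matrix.diagonal
    funext i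
    show Real.sqrt (d i) = Real.sqrt (w i) * Real.sqrt (d i / w i)
    rw [← Real.sqrt_mul (hw i).le]
    congr 1
    field_simp
    rw [mul_div_cancel_right₀ _ (ne_of_gt (hw i))]
  have hfac2 : Sdi = E2 * Swi := by
    rw [hSdi, hSwi, hE2, Matrix.diagonal_mul_diagonal]
    apply congrArg Matrix.diagonal
    funext i
    show (Real.sqrt (d i))⁻¹ = Real.sqrt (w i / d i) * (Real.sqrt (w i))⁻¹
    have hdi : Real.sqrt (d i) ≠ 0 := ne_of_gt (Real.sqrt_pos.mpr (hd i))
    have hwi : Real.sqrt (w i) ≠ 0 := ne_of_gt (Real.sqrt_pos.mpr (hw i))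
    rw [Real.sqrt_div (hw i).le]
    field_simp
  -- main decomposition
  set Z : Matrix (Fin n) (Fin n) ℝ :=
    (1 - α) • (Sd * R * Sdi - Sw * Rb * Swi) with hZ
  have hvec : ((1 - α) • ((Sd * R * Sdi) *ᵥ v) - (1 - α) • ((Sw * Rb * Swi) *ᵥ v)) = Z *ᵥ v := by
    rw [hZ, Matrix.smul_mulVec, Matrix.sub_mulVec, smul_sub]
  have hkey : Sd * R * Sdi - Sw * Rb * Swi =
      Sw * ((E - 1) * R * E2 + R * (E2 - 1) + (R - Rb)) * Swi := by
    rw [hfac1, hfac2]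
    noncomm_ring
  have hdiff : R - Rb = R * (α • (Q - Qbar)) * Rb := by
    have e1 : R * ((1 - α • Qbar) * Rb) = R := by rw [hQbr, mul_one]
    have e2 : R * (1 - α • Q) * Rb = Rb := by rw [hQl, one_mul]
    calc R - Rb = R * ((1 - α • Qbar) * Rb) - R * (1 - α • Q) * Rb := by rw [e1, e2]
      _ = R * ((1 - α • Qbar) - (1 - α • Q)) * Rb := by
          rw [← mul_assoc, ← sub_mul, ← mul_sub]
      _ = R * (α • (Q - Qbar)) * Rb := by
          congr 2
          rw [sub_sub_sub_cancel_left, ← smul_sub]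
  -- norm bounds on pieces
  have hSwn : sNorm Sw ≤ Real.sqrt wmax := by
    apply sNorm_diagonal_le _ _ (Real.sqrt_nonneg _)
    intro i
    rw [abs_of_nonneg (Real.sqrt_nonneg _)]
    exact Real.sqrt_le_sqrt (Finset.le_sup' w (mem_univ i))
  have hSwin : sNorm Swi ≤ (Real.sqrt wmin)⁻¹ := by
    apply sNorm_diagonal_le _ _ (by positivity)
    intro i
    rw [abs_of_nonneg (by positivity)]
    apply inv_anti₀ (Real.sqrt_pos.mpr hwminpos)
    exact Real.sqrt_le_sqrt (Finset.inf'_le w (mem_univ i))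
  have hE1n : sNorm (E - 1) ≤ δ := by
    rw [hE, ← Matrix.diagonal_one, Matrix.diagonal_sub]
    exact sNorm_diagonal_le _ _ hδ (fun i => hδ₁ i)
  have hE21n : sNorm (E2 - 1) ≤ δ := by
    rw [hE2, ← Matrix.diagonal_one, Matrix.diagonal_sub]
    exact sNorm_diagonal_le _ _ hδ (fun i => hδ₂ i)
  have hE2n : sNorm E2 ≤ 1 + δ := by
    apply sNorm_diagonal_le _ _ (by linarith)
    intro i
    rw [abs_of_nonneg (Real.sqrt_nonneg _)]
    have := abs_le.mp (hδ₂ i)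
    linarith [this.2]
  have hQQn : sNorm (α • (Q - Qbar)) ≤ α * t := by
    calc sNorm (α • (Q - Qbar)) ≤ |α| * sNorm (Q - Qbar) := sNorm_smul_le _ _
      _ ≤ α * t := by
          rw [abs_of_pos h0]
          exact mul_le_mul_of_nonneg_left hQQbar h0.le
  have hdiffn : sNorm (R - Rb) ≤ 1 / (1 - α) * (α * t) * (1 / (1 - α)) := by
    rw [hdiff]
    exact sNorm_mul3_le hQn hQQn hQbn (by positivity) (by positivity)
  have hinner : sNorm ((E - 1) * R * E2 + R * (E2 - 1) + (R - Rb)) ≤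
      δ * (1 / (1 - α)) * (1 + δ) + 1 / (1 - α) * δ + 1 / (1 - α) * (α * t) * (1 / (1 - α)) := by
    calc sNorm ((E - 1) * R * E2 + R * (E2 - 1) + (R - Rb))
        ≤ sNorm ((E - 1) * R * E2 + R * (E2 - 1)) + sNorm (R - Rb) := sNorm_add_le _ _
      _ ≤ sNorm ((E - 1) * R * E2) + sNorm (R * (E2 - 1)) + sNorm (R - Rb) := by
          have := sNorm_add_le ((E - 1) * R * E2) (R * (E2 - 1))
          linarith
      _ ≤ δ * (1 / (1 - α)) * (1 + δ) + 1 / (1 - α) * δ + 1 / (1 - α) * (α * t) * (1 / (1 - α)) := by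
          have b1 := sNorm_mul3_le hE1n hQn hE2n hδ (by positivity)
          have b2 := sNorm_mul2_le hQn hE21n (by positivity)
          linarith
  -- norm bound on Z
  have hZn : sNorm Z ≤ Real.sqrt (wmax / wmin) * (t / (1 - α) + 2 * δ + δ ^ 2) := by
    have hb : sNorm (Sw * ((E - 1) * R * E2 + R * (E2 - 1) + (R - Rb)) * Swi) ≤
        Real.sqrt wmax *
          (δ * (1 / (1 - α)) * (1 + δ) + 1 / (1 - α) * δ + 1 / (1 - α) * (α * t) * (1 / (1 - α))) *
          (Real.sqrt wmin)⁻¹ :=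
      sNorm_mul3_le hSwn hinner hSwin (Real.sqrt_nonneg _) (by positivity)
    have hsmul := sNorm_smul_le (1 - α) (Sw * ((E - 1) * R * E2 + R * (E2 - 1) + (R - Rb)) * Swi)
    rw [← hkey] at hb hsmul
    rw [abs_of_pos h1α] at hsmul
    have hsq : Real.sqrt wmax * (Real.sqrt wmin)⁻¹ = Real.sqrt (wmax / wmin) := by
      rw [Real.sqrt_div hwmaxpos.le, div_eq_mul_inv]
    have hZle : sNorm Z ≤ (1 - α) * (Real.sqrt wmax *
          (δ * (1 / (1 - α)) * (1 + δ) + 1 / (1 - α) * δ + 1 / (1 - α) * (α * t) * (1 / (1 - α))) *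
          (Real.sqrt wmin)⁻¹) := by
      rw [hZ]
      refine le_trans hsmul ?_
      exact mul_le_mul_of_nonneg_left hb h1α.le
    refine le_trans hZle ?_
    have hexp : (1 - α) * (Real.sqrt wmax *
          (δ * (1 / (1 - α)) * (1 + δ) + 1 / (1 - α) * δ + 1 / (1 - α) * (α * t) * (1 / (1 - α))) *
          (Real.sqrt wmin)⁻¹) =
        Real.sqrt (wmax / wmin) * (δ * (1 + δ) + δ + α * t / (1 - α)) := by
      rw [← hsq]
      field_simp
    rw [hexp]
    apply mul_le_mul_of_nonneg_left _ (Real.sqrt_nonneg _)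
    have : α * t ≤ t := by nlinarith
    have : α * t / (1 - α) ≤ t / (1 - α) := by
      exact div_le_div_of_nonneg_right this h1α.le
    nlinarith
  -- put it together
  have hsum : ∑ i, |((1 - α) • ((Sd * R * Sdi) *ᵥ v) - (1 - α) • ((Sw * Rb * Swi) *ᵥ v)) i| ≤
      Real.sqrt n * (sNorm Z * vNorm2 v) := by
    rw [hvec]
    refine le_trans (l1_le_sqrt_mul_vNorm2 _) ?_
    exact mul_le_mul_of_nonneg_left (vNorm2_mulVec_le Z v) (Real.sqrt_nonneg _)
  refine le_trans hsum ?_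
  calc Real.sqrt n * (sNorm Z * vNorm2 v)
      ≤ Real.sqrt n * (Real.sqrt (wmax / wmin) * (t / (1 - α) + 2 * δ + δ ^ 2) * vNorm2 v) := by
        apply mul_le_mul_of_nonneg_left _ (Real.sqrt_nonneg _)
        apply mul_le_mul_of_nonneg_right hZn
        rw [vNorm2]; positivity
    _ = Real.sqrt n * vNorm2 v * Real.sqrt (wmax / wmin) * (t / (1 - α) + 2 * δ + δ ^ 2) := by
        ring
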